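/- For every integer k ≥ 0 and any finite set system F, γ₂(AC_k(F)) ≤ k · γ₂(F). -/

import Mathlib

open scoped BigOperators

noncomputable def rowMax {α : Type*} [Fintype α] {r : ℕ} (U : Matrix α (Fin r) ℝ) : ℝ :=
  ⨆ i, Real.sqrt (∑ j, (U i j) ^ 2)

noncomputable def colMax {β : Type*} [Fintype β] {r : ℕ} (V : Matrix (Fin r) β ℝ) : ℝ :=
  ⨆ j, Real.sqrt (∑ i, (V i j) ^ 2)

noncomputable def gamma2 {α β : Type*} [Fintype α] [Fintype β] (A : Matrix α β ℝ) : ℝ :=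
  sInf {t : ℝ | ∃ (r : ℕ) (U : Matrix α (Fin r) ℝ) (V : Matrix (Fin r) β ℝ),
    A = U * V ∧ t = rowMax U * colMax V}

noncomputable def incidenceMatrix {α : Type*} [Fintype α] [DecidableEq α]
    (F : Finset (Finset α)) : Matrix {S // S ∈ F} α ℝ :=
  Matrix.of fun S p => if p ∈ S.1 then (1 : ℝ) else 0

noncomputable def gamma2Sys {α : Type*} [Fintype α] [DecidableEq α]
    (F : Finset (Finset α)) : ℝ :=
  gamma2 (incidenceMatrix F)

/-- `AC F k S` means `S` is an admissible `k`-composition of sets of `F`. -/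
inductive AC {α : Type*} [DecidableEq α] (F : Finset (Finset α)) : ℕ → Finset α → Prop
  | base {S : Finset α} : S ∈ F → AC F 1 S
  | union {k₁ k₂ : ℕ} {S₁ S₂ : Finset α} :
      AC F k₁ S₁ → AC F k₂ S₂ → Disjoint S₁ S₂ → AC F (k₁ + k₂) (S₁ ∪ S₂)
  | sdiff {k₁ k₂ : ℕ} {S₁ S₂ : Finset α} :
      AC F k₁ S₁ → AC F k₂ S₂ → S₂ ⊆ S₁ → AC F (k₁ + k₂) (S₁ \ S₂)

open Classical in
/-- The set system of all admissible `k`-compositions of sets from `F`. -/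
noncomputable def ACk {α : Type*} [Fintype α] [DecidableEq α]
    (F : Finset (Finset α)) (k : ℕ) : Finset (Finset α) :=
  Finset.univ.filter fun S => AC F k S

/-! ### Auxiliary lemmas -/

lemma AC_decomp {α : Type*} [DecidableEq α] {F : Finset (Finset α)} {k : ℕ} {S : Finset α}
    (h : AC F k S) :
    ∃ (f : Fin k → Finset α) (ε : Fin k → ℝ), (∀ i, f i ∈ F) ∧ (∀ i, ε i = 1 ∨ ε i = -1) ∧
      ∀ p : α, (if p ∈ S then (1:ℝ) else 0) = ∑ i, ε i * (if p ∈ f i then (1:ℝ) else 0) := by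
  induction h with
  | @base S hS =>
    exact ⟨fun _ => S, fun _ => 1, fun _ => hS, fun _ => Or.inl rfl, fun p => by simp⟩
  | @union k₁ k₂ S₁ S₂ h1 h2 hd ih1 ih2 =>
    obtain ⟨f₁, ε₁, hf₁, hε₁, hid₁⟩ := ih1
    obtain ⟨f₂, ε₂, hf₂, hε₂, hid₂⟩ := ih2
    refine ⟨Fin.append f₁ f₂, Fin.append ε₁ ε₂, ?_, ?_, ?_⟩
    · intro i
      induction i using Fin.addCases with
      | left i => simpa using hf₁ i
      | right i => simpa using hf₂ i
    · intro i
      induction i using Fin.addCases with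
      | left i => simpa using hε₁ i
      | right i => simpa using hε₂ i
    · intro p
      rw [Fin.sum_univ_add]
      simp only [Fin.append_left, Fin.append_right]
      rw [← hid₁ p, ← hid₂ p]
      by_cases h1p : p ∈ S₁ <;> by_cases h2p : p ∈ S₂ <;>
        simp [h1p, h2p]
      exact Finset.disjoint_left.mp hd h1p h2p
  | @sdiff k₁ k₂ S₁ S₂ h1 h2 hsub ih1 ih2 =>
    obtain ⟨f₁, ε₁, hf₁, hε₁, hid₁⟩ := ih1
    obtain ⟨f₂, ε₂, hf₂, hε₂, hid₂⟩ := ih2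
    refine ⟨Fin.append f₁ f₂, Fin.append ε₁ (fun i => -ε₂ i), ?_, ?_, ?_⟩
    · intro i
      induction i using Fin.addCases with
      | left i => simpa using hf₁ i
      | right i => simpa using hf₂ i
    · intro i
      induction i using Fin.addCases with
      | left i => simpa using hε₁ i
      | right i => rcases hε₂ i with h | h <;> simp [h]
    · intro p
      rw [Fin.sum_univ_add]
      simp only [Fin.append_left, Fin.append_right, neg_mul, Finset.sum_neg_distrib]
      rw [← hid₁ p, ← hid₂ p]
      by_cases h1p : p ∈ S₁ <;> by_cases h2p : p ∈ S₂ <;>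
        simp [h1p, h2p, Finset.mem_sdiff]
      exact absurd (hsub h2p) h1p

lemma rowMax_nonneg {α : Type*} [Fintype α] {r : ℕ} (U : Matrix α (Fin r) ℝ) : 0 ≤ rowMax U :=
  Real.iSup_nonneg fun _ => Real.sqrt_nonneg _

lemma colMax_nonneg {β : Type*} [Fintype β] {r : ℕ} (V : Matrix (Fin r) β ℝ) : 0 ≤ colMax V :=
  Real.iSup_nonneg fun _ => Real.sqrt_nonneg _

lemma gamma2_set_bddBelow {α β : Type*} [Fintype α] [Fintype β] (A : Matrix α β ℝ) :
    BddBelow {t : ℝ | ∃ (r : ℕ) (U : Matrix α (Fin r) ℝ) (V : Matrix (Fin r) β ℝ),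
      A = U * V ∧ t = rowMax U * colMax V} := by
  refine ⟨0, ?_⟩
  rintro t ⟨r, U, V, -, rfl⟩
  exact mul_nonneg (rowMax_nonneg U) (colMax_nonneg V)

lemma gamma2_set_nonempty {α β : Type*} [Fintype α] [Fintype β] [DecidableEq β]
    (A : Matrix α β ℝ) :
    {t : ℝ | ∃ (r : ℕ) (U : Matrix α (Fin r) ℝ) (V : Matrix (Fin r) β ℝ),
      A = U * V ∧ t = rowMax U * colMax V}.Nonempty := by
  classical
  set e := Fintype.equivFin β with he
  refine ⟨_, Fintype.card β, Matrix.of fun a j => A a (e.symm j),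
    Matrix.of fun j b => if e.symm j = b then 1 else 0,
    ?_, rfl⟩
  ext a b
  simp only [Matrix.mul_apply, Matrix.of_apply, mul_ite, mul_one, mul_zero]
  rw [Finset.sum_eq_single (e b)]
  · simp
  · intro j _ hj
    rw [if_neg]
    intro hc
    exact hj (by rw [← hc]; simp)
  · intro hmem; exact absurd (Finset.mem_univ _) hmem

lemma sqrt_row_le_rowMax {α : Type*} [Fintype α] {r : ℕ} (U : Matrix α (Fin r) ℝ) (a : α) :
    Real.sqrt (∑ j, (U a j) ^ 2) ≤ rowMax U := by
  unfold rowMax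
  exact le_ciSup (f := fun a => Real.sqrt (∑ j, (U a j) ^ 2))
    (Set.Finite.bddAbove (Set.finite_range _)) a

lemma signed_comb_row_bound {α : Type*} [Fintype α] {r k : ℕ}
    (U : Matrix α (Fin r) ℝ) (f : Fin k → α) (ε : Fin k → ℝ) (hε : ∀ i, ε i = 1 ∨ ε i = -1) :
    Real.sqrt (∑ j, (∑ i, ε i * U (f i) j) ^ 2) ≤ k * rowMax U := by
  set g : Fin k → EuclideanSpace ℝ (Fin r) :=
    fun i => (WithLp.equiv 2 (Fin r → ℝ)).symm (fun j => ε i * U (f i) j) with hg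
  have hsum : Real.sqrt (∑ j, (∑ i, ε i * U (f i) j) ^ 2) = ‖∑ i, g i‖ := by
    rw [EuclideanSpace.norm_eq]
    congr 1
    refine Finset.sum_congr rfl fun j _ => ?_
    rw [Real.norm_eq_abs, sq_abs]
    congr 1
    simp [hg, WithLp.ofLp_sum]
  rw [hsum]
  calc ‖∑ i, g i‖ ≤ ∑ i, ‖g i‖ := norm_sum_le _ _
    _ ≤ ∑ _i : Fin k, rowMax U := by
        refine Finset.sum_le_sum fun i _ => ?_
        have : ‖g i‖ = Real.sqrt (∑ j, (U (f i) j) ^ 2) := by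
          rw [EuclideanSpace.norm_eq]
          congr 1
          refine Finset.sum_congr rfl fun j _ => ?_
          rw [Real.norm_eq_abs, sq_abs]
          rcases hε i with h | h <;>
            simp [hg, h, mul_pow]
        rw [this]
        exact sqrt_row_le_rowMax U (f i)
    _ = k * rowMax U := by simp [mul_comm]

lemma gamma2_ACk_le_aux {α : Type*} [Fintype α] [DecidableEq α]
    (F : Finset (Finset α)) (k : ℕ) {r : ℕ}
    (U : Matrix {S // S ∈ F} (Fin r) ℝ) (V : Matrix (Fin r) α ℝ)
    (hUV : incidenceMatrix F = U * V) :
    gamma2Sys (ACk F k) ≤ k * (rowMax U * colMax V) := by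
  classical
  -- decompose every member of `ACk F k`
  have hdec : ∀ S : {S // S ∈ ACk F k},
      ∃ (f : Fin k → {T // T ∈ F}) (ε : Fin k → ℝ), (∀ i, ε i = 1 ∨ ε i = -1) ∧
        ∀ p : α, incidenceMatrix (ACk F k) S p = ∑ i, ε i * incidenceMatrix F (f i) p := by
    rintro ⟨S, hS⟩
    have hAC : AC F k S := by
      have := Finset.mem_filter.mp hS
      exact this.2
    obtain ⟨f, ε, hf, hε, hid⟩ := AC_decomp hAC
    exact ⟨fun i => ⟨f i, hf i⟩, ε, hε, fun p => by simpa [incidenceMatrix] using hid p⟩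
  choose f ε hε hid using hdec
  set U' : Matrix {S // S ∈ ACk F k} (Fin r) ℝ :=
    Matrix.of fun S j => ∑ i, ε S i * U (f S i) j with hU'
  have hfact : incidenceMatrix (ACk F k) = U' * V := by
    ext S p
    rw [hid S p]
    simp only [Matrix.mul_apply, hU', Matrix.of_apply, Finset.sum_mul]
    rw [Finset.sum_comm]
    refine Finset.sum_congr rfl fun i _ => ?_
    rw [hUV]
    simp only [Matrix.mul_apply, Finset.mul_sum]
    refine Finset.sum_congr rfl fun j _ => (mul_assoc _ _ _).symm
  have hrow : rowMax U' ≤ k * rowMax U := by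
    refine Real.iSup_le (fun S => ?_)
      (mul_nonneg (Nat.cast_nonneg k) (rowMax_nonneg U))
    exact signed_comb_row_bound U (f S) (ε S) (hε S)
  have hmem : rowMax U' * colMax V ∈ {t : ℝ |
      ∃ (r : ℕ) (U₀ : Matrix {S // S ∈ ACk F k} (Fin r) ℝ) (V₀ : Matrix (Fin r) α ℝ),
      incidenceMatrix (ACk F k) = U₀ * V₀ ∧ t = rowMax U₀ * colMax V₀} :=
    ⟨r, U', V, hfact, rfl⟩
  have hle : rowMax U' * colMax V ≤ k * (rowMax U * colMax V) := by
    rw [← mul_assoc]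
    exact mul_le_mul_of_nonneg_right hrow (colMax_nonneg V)
  exact csInf_le_of_le (gamma2_set_bddBelow _) hmem hle

/-- `γ₂(AC_k(F)) ≤ k ⬝ γ₂(F)`. -/
theorem gamma2_ACk_le {α : Type*} [Fintype α] [DecidableEq α]
    (F : Finset (Finset α)) (k : ℕ) :
    gamma2Sys (ACk F k) ≤ k * gamma2Sys F := by
  classical
  have hne := gamma2_set_nonempty (incidenceMatrix F)
  have key : ∀ t ∈ {t : ℝ | ∃ (r : ℕ) (U : Matrix {S // S ∈ F} (Fin r) ℝ)
      (V : Matrix (Fin r) α ℝ), incidenceMatrix F = U * V ∧ t = rowMax U * colMax V},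
      gamma2Sys (ACk F k) ≤ k * t := by
    rintro t ⟨r, U, V, hUV, rfl⟩
    exact gamma2_ACk_le_aux F k U V hUV
  rcases Nat.eq_zero_or_pos k with hk | hk
  · obtain ⟨t, ht⟩ := hne
    have := key t ht
    simp only [hk, Nat.cast_zero, zero_mul] at this ⊢
    exact this
  · have hkpos : (0 : ℝ) < k := by exact_mod_cast hk
    have hdiv : gamma2Sys (ACk F k) / k ≤ gamma2Sys F := by
      refine le_csInf hne fun t ht => ?_
      rw [div_le_iff₀ hkpos]
      rw [mul_comm]
      exact key t ht
    calc gamma2Sys (ACk F k) = (gamma2Sys (ACk F k) / k) * k := by field_simp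
      _ ≤ gamma2Sys F * k := mul_le_mul_of_nonneg_right hdiv hkpos.le
      _ = k * gamma2Sys F := mul_comm _ _
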